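/- The mechanism that selects a rank-optimal contingent stable matching under absolute priorities is not strategy-proof for families: there exists an instance with a single family-level tie-breaker in which, when all families report truthfully, the unique rank-optimal contingent stable matching leaves a student s unassigned, but if s's family misreports by extending its preference list, the resulting rank-optimal contingent stable matching assigns s to a school s truly prefers to being unassigned. -/

import Mathlib

open scoped Classical

/-- A many-to-one matching market with levels, families, priority groups and
random tie-breakers, as in "Stable Matching with Contingent Priorities". -/
structure Market where
  Student : Type
  School : Type
  Level : Type
  [instFinS : Fintype Student]
  [instDecS : DecidableEq Student]
  [instFinC : Fintype School]
  [instDecC : DecidableEq School]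
  [instFinL : Fintype Level]
  [instDecL : DecidableEq Level]
  level : Student → Level
  sameFamily : Student → Student → Prop
  fam_refl : ∀ s, sameFamily s s
  fam_symm : ∀ s s', sameFamily s s' → sameFamily s' s
  fam_trans : ∀ s s' s'', sameFamily s s' → sameFamily s' s'' → sameFamily s s''
  cap : School → Level → ℕ
  /-- strict preference of each student over schools plus the outside option `none` -/
  pref : Student → Option School → Option School → Prop
  pref_irrefl : ∀ s o, ¬ pref s o o
  pref_trans : ∀ s o₁ o₂ o₃, pref s o₁ o₂ → pref s o₂ o₃ → pref s o₁ o₃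
  pref_total : ∀ s o o', o ≠ o' → pref s o o' ∨ pref s o' o
  nGroups : ℕ
  nGroups_pos : 1 ≤ nGroups
  group : Student → School → ℕ
  group_pos : ∀ s c, 1 ≤ group s c
  group_le : ∀ s c, group s c ≤ nGroups
  /-- random tie-breakers (smaller is better) -/
  tb : Student → School → ℝ
  tb_distinct : ∀ c s s', s ≠ s' → tb s c ≠ tb s' c

attribute [instance] Market.instFinS Market.instDecS Market.instFinC
  Market.instDecC Market.instFinL Market.instDecL

namespace Market

variable (M : Market)

/-- `s` weakly prefers `o` to `o'`. -/
def wPref (s : M.Student) (o o' : Option M.School) : Prop :=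
  o = o' ∨ M.pref s o o'

/-- A feasible matching: every assigned student finds their school acceptable and the
school offers seats at their level, and per-level capacities are respected. -/
def IsMatching (μ : M.Student → Option M.School) : Prop :=
  (∀ s c, μ s = some c → M.pref s (some c) none ∧ 0 < M.cap c (M.level s)) ∧
  (∀ c ℓ, (Finset.univ.filter fun s => μ s = some c ∧ M.level s = ℓ).card ≤ M.cap c ℓ)

/-- Number of students of level `ℓ` assigned to `c`. -/
noncomputable def assignedCount (μ : M.Student → Option M.School) (c : M.School)
    (ℓ : M.Level) : ℕ :=
  (Finset.univ.filter fun s => μ s = some c ∧ M.level s = ℓ).card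

/-- Non-wastefulness. -/
def NonWasteful (μ : M.Student → Option M.School) : Prop :=
  ¬ ∃ s c, M.pref s (some c) (μ s) ∧
    M.assignedCount μ c (M.level s) < M.cap c (M.level s)

/-- Initial priority order at school `c` (groups first, tie-breakers second). -/
def initPrio (c : M.School) (s s' : M.Student) : Prop :=
  M.group s c < M.group s' c ∨ (M.group s c = M.group s' c ∧ M.tb s c < M.tb s' c)

/-- Initial stability. -/
def InitStable (μ : M.Student → Option M.School) : Prop :=
  M.IsMatching μ ∧ M.NonWasteful μ ∧
  ¬ ∃ s s' c, μ s' = some c ∧ M.level s = M.level s' ∧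
      M.pref s (some c) (μ s) ∧ M.initPrio c s s'

/-- Number of students of `s`'s level with strictly higher initial priority at `c`
who weakly prefer `c` to their match. -/
noncomputable def rivalCount (μ : M.Student → Option M.School) (s : M.Student)
    (c : M.School) : ℕ :=
  (Finset.univ.filter fun s'' => M.level s'' = M.level s ∧ M.initPrio c s'' s ∧
    M.wPref s'' (some c) (μ s'')).card

/-- `s` provides contingent priority at `c` (Definition 2, refined). -/
def Provides (μ : M.Student → Option M.School) (s : M.Student) (c : M.School) : Prop :=
  μ s = some c ∧
  (∃ s', s' ≠ s ∧ M.sameFamily s s' ∧ M.wPref s' (some c) (μ s')) ∧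
  M.rivalCount μ s c < M.cap c (M.level s)

/-- `s` is the effective priority provider of their family at `c`: the provider with
the most favorable tie-breaker. -/
def EffProvider (μ : M.Student → Option M.School) (s : M.Student) (c : M.School) : Prop :=
  M.Provides μ s c ∧
  ∀ s', s' ≠ s → M.sameFamily s s' → M.Provides μ s' c → M.tb s c < M.tb s' c

/-- Contingent group under absolute priorities. -/
noncomputable def absGroup (μ : M.Student → Option M.School) (s : M.Student)
    (c : M.School) : ℕ :=
  if M.group s c < M.nGroups ∨
      (M.EffProvider μ s c ∧ ∃ s', s' ≠ s ∧ M.sameFamily s s' ∧ μ s' = some c) ∨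
      (∃ s', s' ≠ s ∧ M.sameFamily s s' ∧ M.EffProvider μ s' c)
  then M.group s c else M.nGroups + 1

/-- Contingent priority order under absolute priorities. -/
noncomputable def absPrio (μ : M.Student → Option M.School) (c : M.School)
    (s s' : M.Student) : Prop :=
  M.absGroup μ s c < M.absGroup μ s' c ∨
  (M.absGroup μ s c = M.absGroup μ s' c ∧ M.tb s c < M.tb s' c)

/-- Contingent stability under absolute priorities. -/
def AbsStable (μ : M.Student → Option M.School) : Prop :=
  M.IsMatching μ ∧ M.NonWasteful μ ∧
  ¬ ∃ s s' c, μ s' = some c ∧ M.level s = M.level s' ∧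
      M.pref s (some c) (μ s) ∧ M.absPrio μ c s s'

/-- Contingent tie-breaker under partial priorities: a no-priority student inherits
their effective provider's tie-breaker when it is more favorable. -/
noncomputable def partialTb (μ : M.Student → Option M.School) (s : M.Student)
    (c : M.School) : ℝ :=
  if h : M.group s c = M.nGroups ∧ ¬ M.EffProvider μ s c ∧
      ∃ s', s' ≠ s ∧ M.sameFamily s s' ∧ M.EffProvider μ s' c ∧ M.tb s' c < M.tb s c
  then M.tb h.2.2.choose c
  else M.tb s c

/-- Contingent priority order under partial priorities: groups unchanged, contingent
tie-breakers first, with residual ties (within a family) broken by the initial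
tie-breakers (the ε-perturbation of Definition 5). -/
noncomputable def partialPrio (μ : M.Student → Option M.School) (c : M.School)
    (s s' : M.Student) : Prop :=
  M.group s c < M.group s' c ∨
  (M.group s c = M.group s' c ∧
    (M.partialTb μ s c < M.partialTb μ s' c ∨
      (M.partialTb μ s c = M.partialTb μ s' c ∧ M.tb s c < M.tb s' c)))

/-- Contingent stability under partial priorities. -/
def PartialStable (μ : M.Student → Option M.School) : Prop :=
  M.IsMatching μ ∧ M.NonWasteful μ ∧
  ¬ ∃ s s' c, μ s' = some c ∧ M.level s = M.level s' ∧
      M.pref s (some c) (μ s) ∧ M.partialPrio μ c s s'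

/-- Tie-breakers are at the family level: members of a family compare the same way
against any student outside the family. -/
def FamilyTB : Prop :=
  ∀ c (s s' a : M.Student), M.sameFamily s s' → ¬ M.sameFamily s a →
    (M.tb s c < M.tb a c ↔ M.tb s' c < M.tb a c)

/-- Size of the family of `s`. -/
noncomputable def famSize (s : M.Student) : ℕ :=
  (Finset.univ.filter fun s' => M.sameFamily s s').card

/-- Number of families in the market. -/
noncomputable def numFamilies : ℕ :=
  (Finset.univ.image fun s : M.Student =>
    Finset.univ.filter fun s' => M.sameFamily s s').card

/-- Rank of an outcome in a student's preference list (`none` gets rank `|≻ₛ|+1`,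
the penalty for being unassigned). -/
noncomputable def rankVal (s : M.Student) (o : Option M.School) : ℕ :=
  (Finset.univ.filter fun c : M.School => M.pref s (some c) o).card + 1

/-- Total rank objective of a matching. -/
noncomputable def cost (μ : M.Student → Option M.School) : ℕ :=
  ∑ s, M.rankVal s (μ s)

/-- Rank-optimal contingent stable matching under absolute priorities. -/
def RankOptAbs (μ : M.Student → Option M.School) : Prop :=
  M.AbsStable μ ∧ ∀ μ', M.AbsStable μ' → M.cost μ ≤ M.cost μ'

/-- Rank-optimal contingent stable matching under partial priorities. -/
def RankOptPartial (μ : M.Student → Option M.School) : Prop :=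
  M.PartialStable μ ∧ ∀ μ', M.PartialStable μ' → M.cost μ ≤ M.cost μ'

end Market

namespace CEx

/-- The counterexample market, parametrized by which students find the school
acceptable. -/
@[reducible] def Mk (a : Fin 3 → Bool) : Market where
  Student := Fin 3
  School := Unit
  Level := Fin 2
  level := ![0, 1, 0]
  sameFamily s s' := (s = 2 ↔ s' = 2)
  fam_refl s := Iff.rfl
  fam_symm s s' h := h.symm
  fam_trans s s' s'' h h' := h.trans h'
  cap _ _ := 1
  pref s o o' := if a s then o = some () ∧ o' = none else o = none ∧ o' = some ()
  pref_irrefl s o := by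
    split <;> rintro ⟨rfl, h⟩ <;> exact nomatch h
  pref_trans s o₁ o₂ o₃ := by
    split <;> rintro ⟨rfl, rfl⟩ ⟨h, -⟩ <;> exact nomatch h
  pref_total s o o' h := by
    split <;> rcases o with _ | ⟨⟩ <;> rcases o' with _ | ⟨⟩ <;> simp_all
  nGroups := 1
  nGroups_pos := le_refl 1
  group _ _ := 1
  group_pos _ _ := le_refl 1
  group_le _ _ := le_refl 1
  tb s _ := ![1, 2, 0] s
  tb_distinct c s s' h := by
    fin_cases s <;> fin_cases s' <;> simp_all

/-- truthful acceptability: student 1 finds the school unacceptable -/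
def accT : Fin 3 → Bool := ![true, false, true]
/-- misreported acceptability: all find the school acceptable -/
def accA : Fin 3 → Bool := ![true, true, true]

/-- the unique stable matching under truthful reports -/
def μT : Fin 3 → Option Unit := ![none, none, some ()]
/-- the unique stable matching under the misreport -/
def μA : Fin 3 → Option Unit := ![some (), some (), none]

lemma fin3_cases (s : Fin 3) : s = 0 ∨ s = 1 ∨ s = 2 := by omega

lemma pref_iff (a : Fin 3 → Bool) (s : Fin 3) (o o' : Option Unit) :
    (Mk a).pref s o o' ↔
      (if a s then o = some () ∧ o' = none else o = none ∧ o' = some ()) := Iff.rfl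

lemma level_eq (a : Fin 3 → Bool) : (Mk a).level = (![0, 1, 0] : Fin 3 → Fin 2) := rfl

lemma tb_eq (a : Fin 3 → Bool) (s : Fin 3) (c : Unit) : (Mk a).tb s c = (![1, 2, 0] : Fin 3 → ℝ) s := rfl

lemma sameFamily_iff (a : Fin 3 → Bool) (s s' : Fin 3) :
    (Mk a).sameFamily s s' ↔ (s = 2 ↔ s' = 2) := Iff.rfl

lemma wPref_iff (a : Fin 3 → Bool) (s : Fin 3) (x : Option Unit) :
    (Mk a).wPref s (some ()) x ↔ (x = some () ∨ (a s = true ∧ x = none)) := by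
  unfold Market.wPref
  rw [pref_iff]
  constructor
  · rintro (h | h)
    · exact Or.inl h.symm
    · revert h; split <;> rintro ⟨h1, h2⟩
      · exact Or.inr ⟨by assumption, h2⟩
      · exact nomatch h1
  · rintro (rfl | ⟨ha, rfl⟩)
    · exact Or.inl rfl
    · exact Or.inr (by rw [ha]; exact ⟨rfl, rfl⟩)

lemma absGroup_eq_two (a : Fin 3 → Bool) (μ : Fin 3 → Option Unit) (s : Fin 3)
    (hnp : ∀ t, ¬ (Mk a).Provides μ t ()) : (Mk a).absGroup μ s () = 2 := by
  rw [Market.absGroup, if_neg]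
  rintro (h | ⟨h, -⟩ | ⟨t, -, -, h⟩)
  · exact absurd h (by simp [Mk])
  · exact hnp s h.1
  · exact hnp t h.1

lemma absGroup_eq_one_receiver (a : Fin 3 → Bool) (μ : Fin 3 → Option Unit)
    (hf : (Mk a).EffProvider μ (1 : Fin 3) ()) : (Mk a).absGroup μ (0 : Fin 3) () = 1 := by
  have h3 : ∃ s', s' ≠ (0 : Fin 3) ∧ (Mk a).sameFamily (0 : Fin 3) s' ∧ (Mk a).EffProvider μ s' () :=
    ⟨1, by decide, by rw [sameFamily_iff]; decide, hf⟩
  rw [Market.absGroup]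
  split
  · rfl
  · next h => exact absurd (Or.inr (Or.inr h3)) h

lemma noProv_one_unmatched (a : Fin 3 → Bool) (μ : Fin 3 → Option Unit)
    (hm1 : μ 1 = none) (ha1 : a 1 = false) :
    ∀ t, ¬ (Mk a).Provides μ t () := by
  rintro t ⟨hmt, ⟨s', hne, hfam, hw⟩, -⟩
  rw [sameFamily_iff] at hfam
  rcases fin3_cases t with rfl | rfl | rfl
  · rcases fin3_cases s' with rfl | rfl | rfl
    · exact hne rfl
    · rw [wPref_iff, hm1, ha1] at hw
      rcases hw with h | ⟨h, -⟩ <;> simp at h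
    · simp at hfam
  · rw [hm1] at hmt; exact nomatch hmt
  · rcases fin3_cases s' with rfl | rfl | rfl <;> simp_all

lemma rivalCount_one (a : Fin 3 → Bool) (μ : Fin 3 → Option Unit) :
    (Mk a).rivalCount μ (1 : Fin 3) () = 0 := by
  rw [Market.rivalCount, Finset.card_eq_zero]
  ext x
  rcases fin3_cases x with rfl | rfl | rfl <;>
    simp [Market.initPrio, level_eq, tb_eq, Mk]

lemma effProv_one (a : Fin 3 → Bool) (μ : Fin 3 → Option Unit)
    (hm1 : μ 1 = some ()) (hw0 : (Mk a).wPref (0 : Fin 3) (some ()) (μ 0))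
    (hnp0 : ¬ (Mk a).Provides μ (0 : Fin 3) ()) : (Mk a).EffProvider μ (1 : Fin 3) () := by
  constructor
  · have h2 : ∃ s', s' ≠ (1 : Fin 3) ∧ (Mk a).sameFamily (1 : Fin 3) s' ∧ (Mk a).wPref s' (some ()) (μ s') :=
      ⟨0, by decide, by rw [sameFamily_iff]; decide, hw0⟩
    refine ⟨hm1, h2, ?_⟩
    rw [rivalCount_one]
    exact Nat.one_pos
  · intro s' hne hfam hp
    rw [sameFamily_iff] at hfam
    rcases fin3_cases s' with rfl | rfl | rfl
    · exact absurd hp hnp0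
    · exact absurd rfl hne
    · simp at hfam

lemma fin2_cases (x : Fin 2) : x = 0 ∨ x = 1 := by omega

lemma ne02 : ¬ (0 : Fin 3) = 2 := by decide
lemma ne12 : ¬ (1 : Fin 3) = 2 := by decide
lemma ne20 : ¬ (2 : Fin 3) = 0 := by decide
lemma ne10 : ¬ (1 : Fin 3) = 0 := by decide
lemma neL01 : ¬ (0 : Fin 2) = 1 := by decide
lemma neL10 : ¬ (1 : Fin 2) = 0 := by decide

lemma noProv_two (a : Fin 3 → Bool) (μ : Fin 3 → Option Unit) :
    ¬ (Mk a).Provides μ (2 : Fin 3) () := by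
  rintro ⟨-, ⟨s', hne, hfam, -⟩, -⟩
  rw [sameFamily_iff] at hfam
  exact hne (hfam.1 rfl)

lemma absGroup_two_eq_two (a : Fin 3 → Bool) (μ : Fin 3 → Option Unit) :
    (Mk a).absGroup μ (2 : Fin 3) () = 2 := by
  rw [Market.absGroup]
  split
  · next hcond =>
    exfalso
    rcases hcond with h | ⟨h, -⟩ | ⟨t, hne, hfam, -⟩
    · exact absurd h (by simp [Mk])
    · exact noProv_two a μ h.1
    · rw [sameFamily_iff] at hfam
      exact hne (hfam.1 rfl)
  · rfl

lemma assignedCount_zero (a : Fin 3 → Bool) (μ : Fin 3 → Option Unit) (ℓ : Fin 2)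
    (h : ∀ s : Fin 3, (Mk a).level s = ℓ → μ s = none) :
    (Mk a).assignedCount μ () ℓ = 0 := by
  rw [Market.assignedCount, Finset.card_eq_zero]
  ext x
  simp only [Finset.mem_filter, Finset.mem_univ, true_and, Finset.notMem_empty,
    iff_false, not_and]
  intro hx hl
  rw [h x hl] at hx
  exact nomatch hx

lemma not_both (a : Fin 3 → Bool) (μ : Fin 3 → Option Unit)
    (hM : (Mk a).IsMatching μ) (h0 : μ 0 = some ()) (h2c : μ 2 = some ()) : False := by
  have hle : (Mk a).assignedCount μ () (0 : Fin 2) ≤ 1 := hM.2 () (0 : Fin 2)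
  have h2le : 2 ≤ (Mk a).assignedCount μ () (0 : Fin 2) := by
    rw [Market.assignedCount]
    have hsub : ({0, 2} : Finset (Fin 3)) ⊆
        Finset.univ.filter (fun s : Fin 3 => μ s = some () ∧ (Mk a).level s = (0 : Fin 2)) := by
      intro x hx
      simp only [Finset.mem_insert, Finset.mem_singleton] at hx
      rcases hx with rfl | rfl <;> simp [h0, h2c, level_eq]
    calc 2 = ({0, 2} : Finset (Fin 3)).card := by decide
    _ ≤ _ := Finset.card_le_card hsub
  omega

/-! ### The truthful market -/

lemma stableT : (Mk accT).AbsStable μT := by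
  refine ⟨⟨?_, ?_⟩, ?_, ?_⟩
  · intro s c hs
    obtain ⟨⟩ := c
    rcases fin3_cases s with rfl | rfl | rfl
    · simp [μT] at hs
    · simp [μT] at hs
    · exact ⟨by rw [pref_iff]; simp [accT], Nat.one_pos⟩
  · intro c ℓ
    obtain ⟨⟩ := c
    have hsub : (Finset.univ.filter fun s : Fin 3 => μT s = some () ∧ (Mk accT).level s = ℓ)
        ⊆ {2} := by
      intro x hx
      simp only [Finset.mem_filter, Finset.mem_univ, true_and] at hx
      rcases fin3_cases x with rfl | rfl | rfl
      · simp [μT] at hx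
      · simp [μT] at hx
      · simp
    calc _ ≤ ({2} : Finset (Fin 3)).card := Finset.card_le_card hsub
    _ ≤ _ := by simp [Mk]
  · rintro ⟨s, c, hp, hc⟩
    obtain ⟨⟩ := c
    rcases fin3_cases s with rfl | rfl | rfl
    · have h1 : (Mk accT).assignedCount μT () ((Mk accT).level (0 : Fin 3)) = 1 := by
        rw [Market.assignedCount, Finset.card_eq_one]
        refine ⟨(2 : Fin 3), ?_⟩
        ext x
        simp only [Finset.mem_filter, Finset.mem_univ, true_and, Finset.mem_singleton]
        rcases fin3_cases x with rfl | rfl | rfl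
        · simp only [μT]
          exact ⟨fun hh => absurd hh.1 (by simp), fun hh => absurd hh ne02⟩
        · simp only [μT]
          exact ⟨fun hh => absurd hh.1 (by simp), fun hh => absurd hh ne12⟩
        · simp [μT, level_eq]
      rw [h1] at hc
      exact absurd hc (by simp [Mk])
    · rw [pref_iff] at hp
      simp [accT, μT] at hp
    · rw [pref_iff] at hp
      simp [accT, μT] at hp
  · rintro ⟨s, s', c, hm, hl, hp, hprio⟩
    obtain ⟨⟩ := c
    have hnp := noProv_one_unmatched accT μT rfl rfl
    rcases fin3_cases s' with rfl | rfl | rfl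
    · simp [μT] at hm
    · simp [μT] at hm
    · rcases fin3_cases s with rfl | rfl | rfl
      · rcases hprio with h | ⟨-, h⟩
        · rw [absGroup_eq_two _ _ _ hnp, absGroup_two_eq_two] at h
          exact lt_irrefl _ h
        · have h' : ((1 : ℝ)) < 0 := h
          norm_num at h'
      · rw [pref_iff] at hp
        simp [accT, μT] at hp
      · rw [pref_iff] at hp
        simp [accT, μT] at hp

lemma stableT_unique (μ : Fin 3 → Option Unit) (h : (Mk accT).AbsStable μ) : μ = μT := by
  have hm1 : μ 1 = none := by
    cases hmm : μ 1 with
    | none => rfl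
    | some u =>
      obtain ⟨⟩ := u
      have h2 := (h.1.1 (1 : Fin 3) () hmm).1
      rw [pref_iff] at h2
      simp [accT] at h2
  cases hm0 : μ 0 with
  | some u =>
    obtain ⟨⟩ := u
    cases hm2 : μ 2 with
    | some u2 =>
      obtain ⟨⟩ := u2
      exact absurd (not_both accT μ h.1 hm0 hm2) not_false
    | none =>
      exfalso
      apply h.2.2
      have hnp := noProv_one_unmatched accT μ hm1 rfl
      refine ⟨(2 : Fin 3), (0 : Fin 3), (), hm0, rfl, ?_, ?_⟩
      · rw [hm2, pref_iff]; simp [accT]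
      · refine Or.inr ⟨?_, ?_⟩
        · rw [absGroup_two_eq_two, absGroup_eq_two _ _ _ hnp]
        · show ((0 : ℝ)) < 1
          norm_num
  | none =>
    cases hm2 : μ 2 with
    | some u =>
      obtain ⟨⟩ := u
      funext s
      rcases fin3_cases s with rfl | rfl | rfl <;> simp [μT, hm0, hm1, hm2]
    | none =>
      exfalso
      apply h.2.1
      refine ⟨(2 : Fin 3), (), ?_, ?_⟩
      · rw [hm2, pref_iff]; simp [accT]
      · have hz : (Mk accT).assignedCount μ () ((Mk accT).level (2 : Fin 3)) = 0 := by
          refine assignedCount_zero _ _ _ (fun s hs => ?_)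
          rcases fin3_cases s with rfl | rfl | rfl
          exacts [hm0, hm1, hm2]
        rw [hz]
        exact Nat.one_pos

/-! ### The misreported market -/

lemma rivalCount_zero_A (μ : Fin 3 → Option Unit) (hm2 : μ 2 = none ∨ μ 2 = some ()) :
    (Mk accA).rivalCount μ (0 : Fin 3) () = 1 := by
  rw [Market.rivalCount, Finset.card_eq_one]
  refine ⟨(2 : Fin 3), ?_⟩
  ext x
  simp only [Finset.mem_filter, Finset.mem_univ, true_and, Finset.mem_singleton]
  rcases fin3_cases x with rfl | rfl | rfl
  · constructor
    · rintro ⟨-, hip, -⟩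
      exfalso
      rcases hip with hlt | ⟨-, hlt⟩
      · exact absurd hlt (by simp [Mk])
      · exact lt_irrefl _ hlt
    · intro hx; exact absurd hx ne02
  · constructor
    · rintro ⟨hlv, -, -⟩
      exact absurd hlv neL10
    · intro hx; exact absurd hx ne12
  · constructor
    · intro _; rfl
    · intro _
      refine ⟨rfl, Or.inr ⟨rfl, ?_⟩, ?_⟩
      · show ((0 : ℝ)) < 1
        norm_num
      · rw [wPref_iff]
        rcases hm2 with hh | hh
        · exact Or.inr ⟨rfl, hh⟩
        · exact Or.inl hh

lemma stableA : (Mk accA).AbsStable μA := by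
  have heff : (Mk accA).EffProvider μA (1 : Fin 3) () := by
    refine effProv_one accA μA rfl ?_ ?_
    · rw [wPref_iff]; exact Or.inl rfl
    · rintro ⟨-, -, hriv⟩
      rw [rivalCount_zero_A μA (Or.inl rfl)] at hriv
      exact absurd hriv (by simp [Mk])
  refine ⟨⟨?_, ?_⟩, ?_, ?_⟩
  · intro s c hs
    obtain ⟨⟩ := c
    rcases fin3_cases s with rfl | rfl | rfl
    · exact ⟨by rw [pref_iff]; simp [accA], Nat.one_pos⟩
    · exact ⟨by rw [pref_iff]; simp [accA], Nat.one_pos⟩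
    · simp [μA] at hs
  · intro c ℓ
    obtain ⟨⟩ := c
    rcases fin2_cases ℓ with rfl | rfl
    · have hsub : (Finset.univ.filter fun s : Fin 3 =>
          μA s = some () ∧ (Mk accA).level s = (0 : Fin 2)) ⊆ {0} := by
        intro x hx
        simp only [Finset.mem_filter, Finset.mem_univ, true_and] at hx
        rcases fin3_cases x with rfl | rfl | rfl
        · simp
        · exact absurd hx.2 neL10
        · simp [μA] at hx
      calc _ ≤ ({0} : Finset (Fin 3)).card := Finset.card_le_card hsub
      _ ≤ _ := by simp [Mk]
    · have hsub : (Finset.univ.filter fun s : Fin 3 =>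
          μA s = some () ∧ (Mk accA).level s = (1 : Fin 2)) ⊆ {1} := by
        intro x hx
        simp only [Finset.mem_filter, Finset.mem_univ, true_and] at hx
        rcases fin3_cases x with rfl | rfl | rfl
        · exact absurd hx.2 neL01
        · simp
        · simp [μA] at hx
      calc _ ≤ ({1} : Finset (Fin 3)).card := Finset.card_le_card hsub
      _ ≤ _ := by simp [Mk]
  · rintro ⟨s, c, hp, hc⟩
    obtain ⟨⟩ := c
    rcases fin3_cases s with rfl | rfl | rfl
    · rw [pref_iff] at hp
      simp [accA, μA] at hp
    · rw [pref_iff] at hp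
      simp [accA, μA] at hp
    · have h1 : (Mk accA).assignedCount μA () ((Mk accA).level (2 : Fin 3)) = 1 := by
        rw [Market.assignedCount, Finset.card_eq_one]
        refine ⟨(0 : Fin 3), ?_⟩
        ext x
        simp only [Finset.mem_filter, Finset.mem_univ, true_and, Finset.mem_singleton]
        rcases fin3_cases x with rfl | rfl | rfl
        · simp [μA, level_eq]
        · constructor
          · rintro ⟨-, hlv⟩
            exact absurd hlv neL10
          · intro hx; exact absurd hx ne10
        · simp only [μA]
          exact ⟨fun hh => absurd hh.1 (by simp), fun hh => absurd hh ne20⟩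
      rw [h1] at hc
      exact absurd hc (by simp [Mk])
  · rintro ⟨s, s', c, hm, hl, hp, hprio⟩
    obtain ⟨⟩ := c
    rcases fin3_cases s with rfl | rfl | rfl
    · rw [pref_iff] at hp
      simp [accA, μA] at hp
    · rw [pref_iff] at hp
      simp [accA, μA] at hp
    · rcases fin3_cases s' with rfl | rfl | rfl
      · rcases hprio with hlt | ⟨heq, -⟩
        · rw [absGroup_two_eq_two, absGroup_eq_one_receiver _ _ heff] at hlt
          omega
        · rw [absGroup_two_eq_two, absGroup_eq_one_receiver _ _ heff] at heq
          omega
      · exact absurd hl neL01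
      · simp [μA] at hm

lemma stableA_unique (μ : Fin 3 → Option Unit) (h : (Mk accA).AbsStable μ) : μ = μA := by
  have hm1 : μ 1 = some () := by
    cases hmm : μ 1 with
    | some u => obtain ⟨⟩ := u; rfl
    | none =>
      exfalso
      apply h.2.1
      refine ⟨(1 : Fin 3), (), ?_, ?_⟩
      · rw [hmm, pref_iff]; simp [accA]
      · have hz : (Mk accA).assignedCount μ () ((Mk accA).level (1 : Fin 3)) = 0 := by
          refine assignedCount_zero _ _ _ (fun s hs => ?_)
          rcases fin3_cases s with rfl | rfl | rfl
          · exact absurd hs neL01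
          · exact hmm
          · exact absurd hs neL01
        rw [hz]
        exact Nat.one_pos
  cases hm0 : μ 0 with
  | some u =>
    obtain ⟨⟩ := u
    cases hm2 : μ 2 with
    | some u2 =>
      obtain ⟨⟩ := u2
      exact absurd (not_both accA μ h.1 hm0 hm2) not_false
    | none =>
      funext s
      rcases fin3_cases s with rfl | rfl | rfl <;> simp [μA, hm0, hm1, hm2]
  | none =>
    cases hm2 : μ 2 with
    | none =>
      exfalso
      apply h.2.1
      refine ⟨(0 : Fin 3), (), ?_, ?_⟩
      · rw [hm0, pref_iff]; simp [accA]
      · have hz : (Mk accA).assignedCount μ () ((Mk accA).level (0 : Fin 3)) = 0 := by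
          refine assignedCount_zero _ _ _ (fun s hs => ?_)
          rcases fin3_cases s with rfl | rfl | rfl
          · exact hm0
          · exact absurd hs neL10
          · exact hm2
        rw [hz]
        exact Nat.one_pos
    | some u =>
      obtain ⟨⟩ := u
      exfalso
      apply h.2.2
      have hnp0 : ¬ (Mk accA).Provides μ (0 : Fin 3) () := by
        rintro ⟨hc, -, -⟩
        rw [hm0] at hc
        exact nomatch hc
      have heff : (Mk accA).EffProvider μ (1 : Fin 3) () := by
        refine effProv_one accA μ hm1 ?_ hnp0
        rw [wPref_iff, hm0]
        exact Or.inr ⟨rfl, rfl⟩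
      refine ⟨(0 : Fin 3), (2 : Fin 3), (), hm2, rfl, ?_, ?_⟩
      · rw [hm0, pref_iff]; simp [accA]
      · refine Or.inl ?_
        rw [absGroup_two_eq_two, absGroup_eq_one_receiver _ _ heff]
        omega

end CEx


/-- The mechanism selecting a rank-optimal contingent stable matching
under absolute priorities is not strategy-proof for families: with a single
family-level tie-breaker, truthful reports leave student s₀ unassigned in every
rank-optimal contingent stable matching, but if s₀'s family misreports by
extending its preference lists, every rank-optimal contingent stable matching of
the misreported market assigns s₀ to a school s₀ truly prefers to being
unassigned. -/
theorem abs_not_strategyproof :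
    ∃ (M : Market) (s0 : M.Student)
      (P' : M.Student → Option M.School → Option M.School → Prop)
      (h1 : ∀ s o, ¬ P' s o o)
      (h2 : ∀ s o₁ o₂ o₃, P' s o₁ o₂ → P' s o₂ o₃ → P' s o₁ o₃)
      (h3 : ∀ s o o', o ≠ o' → P' s o o' ∨ P' s o' o),
      -- single tie-breaker at the family level
      (∀ s c c', M.tb s c = M.tb s c') ∧ M.FamilyTB ∧
      -- only s₀'s family misreports, and it does so by extending its lists
      (∀ s, ¬ M.sameFamily s0 s → P' s = M.pref s) ∧
      (∀ s c, M.sameFamily s0 s → M.pref s (some c) none → P' s (some c) none) ∧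
      -- under truthful reports s₀ is unassigned in the rank-optimal outcome
      (∃ μ, M.RankOptAbs μ) ∧
      (∀ μ, M.RankOptAbs μ → μ s0 = none) ∧
      -- under the misreport s₀ is assigned to a truly acceptable school
      (let M' : Market :=
        { M with pref := P', pref_irrefl := h1, pref_trans := h2, pref_total := h3 }
       (∃ μ', M'.RankOptAbs μ') ∧
       (∀ μ' : M.Student → Option M.School, M'.RankOptAbs μ' →
         ∃ c, μ' s0 = some c ∧ M.pref s0 (some c) none)) := by
  refine ⟨CEx.Mk CEx.accT, (0 : Fin 3), (CEx.Mk CEx.accA).pref,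
    (CEx.Mk CEx.accA).pref_irrefl, (CEx.Mk CEx.accA).pref_trans,
    (CEx.Mk CEx.accA).pref_total, fun s c c' => rfl, ?_, ?_, ?_, ?_, ?_, ?_⟩
  · -- FamilyTB
    intro c s s' a hss hsa
    rcases CEx.fin3_cases s with rfl | rfl | rfl <;>
      rcases CEx.fin3_cases s' with rfl | rfl | rfl <;>
        rcases CEx.fin3_cases a with rfl | rfl | rfl <;>
          first
            | rfl
            | exact absurd hss hsa
            | (exfalso; revert hss hsa
               rw [CEx.sameFamily_iff, CEx.sameFamily_iff]; decide)
            | (show ((1:ℝ) < 0 ↔ (2:ℝ) < 0); norm_num)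
            | (show ((2:ℝ) < 0 ↔ (1:ℝ) < 0); norm_num)
            | (norm_num [CEx.tb_eq])
  · -- non-family members report truthfully
    intro s hns
    rcases CEx.fin3_cases s with rfl | rfl | rfl
    · exact absurd ((CEx.Mk CEx.accT).fam_refl _) hns
    · exact absurd (by rw [CEx.sameFamily_iff]; decide) hns
    · rfl
  · -- family misreport extends lists
    intro s c hfam hp
    obtain ⟨⟩ := c
    rcases CEx.fin3_cases s with rfl | rfl | rfl <;>
      · rw [CEx.pref_iff]; simp [CEx.accA]
  · exact ⟨CEx.μT, CEx.stableT, fun μ' h' => by rw [CEx.stableT_unique μ' h']⟩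
  · intro μ h
    rw [CEx.stableT_unique μ h.1]
    rfl
  · refine ⟨⟨CEx.μA, CEx.stableA, fun μ' h' => by rw [CEx.stableA_unique μ' h']⟩,
      fun μ' h' => ?_⟩
    rw [CEx.stableA_unique μ' h'.1]
    refine ⟨(), rfl, ?_⟩
    rw [CEx.pref_iff]
    simp [CEx.accT]
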